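/- arXiv:1807.03189 — 7 statements merged into one kernel-verified Lean document; each statement's English description precedes it below -/
import Mathlib

section
/- Let $1 \le r \le s$ be integers and let $\mu_1, \dots, \mu_s$ be elements of a commutative ring (e.g. real numbers or indeterminates). Then $\sum_{i=s-r}^{s} (-1)^i \binom{i}{s-r} \sum_{1 \le j_1 < \cdots < j_i \le s} \left( \sum_{e=1}^{i} \mu_{j_e} \right)^r = (-1)^s \, r! \cdot e_r(\mu_1, \dots, \mu_s)$, where $e_r$ denotes the $r$-th elementary symmetric polynomial $e_r(\mu_1,\dots,\mu_s) = \sum_{1 \le j_1 < \cdots < j_r \le s} \mu_{j_1}\cdots\mu_{j_r}$. -/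
open Finset

/-- Key finite-difference lemma: the alternating sum of `(c + ∑_T μ)^n` over subsets `T ⊆ S`
vanishes when `n < |S|` and equals `(-1)^|S| |S|! ∏_S μ` when `n = |S|`. -/
lemma key_diff {R : Type*} [CommRing R] {α : Type*} [DecidableEq α] (S : Finset α) (μ : α → R) :
    ∀ n ≤ S.card, ∀ c : R,
    ∑ T ∈ S.powerset, (-1 : R) ^ T.card * (c + ∑ j ∈ T, μ j) ^ n
      = if n = S.card then (-1 : R) ^ S.card * n.factorial * ∏ j ∈ S, μ j else 0 := by
  induction S using Finset.induction_on with
  | empty =>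
    intro n hn c
    obtain rfl : n = 0 := Nat.le_zero.mp (by simpa using hn)
    simp
  | @insert a S' ha ih =>
    intro n hn c
    rw [Finset.sum_powerset_insert ha]
    have h2 : ∀ T ∈ S'.powerset,
        (-1 : R) ^ (insert a T).card * (c + ∑ j ∈ insert a T, μ j) ^ n
          = -((-1 : R) ^ T.card * ((c + ∑ j ∈ T, μ j) + μ a) ^ n) := by
      intro T hT
      have haT : a ∉ T := fun h => ha (Finset.mem_powerset.mp hT h)
      rw [Finset.card_insert_of_notMem haT, Finset.sum_insert haT, pow_succ]
      ring
    rw [Finset.sum_congr rfl h2]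
    have hbin : ∀ x : R, x ^ n - (x + μ a) ^ n
        = -∑ k ∈ Finset.range n, x ^ k * μ a ^ (n - k) * (n.choose k : R) := by
      intro x
      rw [add_pow, Finset.sum_range_succ, Nat.choose_self, Nat.sub_self, pow_zero,
        Nat.cast_one]
      ring
    have main : ∑ T ∈ S'.powerset, (-1 : R) ^ T.card * (c + ∑ j ∈ T, μ j) ^ n +
          ∑ T ∈ S'.powerset, -((-1 : R) ^ T.card * ((c + ∑ j ∈ T, μ j) + μ a) ^ n)
        = -∑ k ∈ Finset.range n, μ a ^ (n - k) * (n.choose k : R) *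
            ∑ T ∈ S'.powerset, (-1 : R) ^ T.card * (c + ∑ j ∈ T, μ j) ^ k := by
      rw [← Finset.sum_add_distrib]
      have hpt : ∀ T ∈ S'.powerset,
          (-1 : R) ^ T.card * (c + ∑ j ∈ T, μ j) ^ n +
            -((-1 : R) ^ T.card * ((c + ∑ j ∈ T, μ j) + μ a) ^ n)
          = ∑ k ∈ Finset.range n, -((-1 : R) ^ T.card *
              ((c + ∑ j ∈ T, μ j) ^ k * μ a ^ (n - k) * (n.choose k : R))) := by
        intro T _
        have hb := hbin (c + ∑ j ∈ T, μ j)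
        rw [Finset.sum_neg_distrib, ← Finset.mul_sum]
        linear_combination ((-1 : R) ^ T.card) * hb
      rw [Finset.sum_congr rfl hpt, Finset.sum_comm, ← Finset.sum_neg_distrib]
      refine Finset.sum_congr rfl fun k _ => ?_
      rw [Finset.mul_sum, ← Finset.sum_neg_distrib]
      exact Finset.sum_congr rfl fun T _ => by ring
    rw [main]
    rw [Finset.card_insert_of_notMem ha] at hn ⊢
    by_cases hns : n = S'.card + 1
    · subst hns
      rw [Finset.sum_range_succ]
      have hz : ∑ k ∈ Finset.range S'.card, μ a ^ (S'.card + 1 - k) *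
          ((S'.card + 1).choose k : R) *
          ∑ T ∈ S'.powerset, (-1 : R) ^ T.card * (c + ∑ j ∈ T, μ j) ^ k = 0 := by
        refine Finset.sum_eq_zero fun k hk => ?_
        rw [ih k (le_of_lt (Finset.mem_range.mp hk)) c, if_neg
          (Nat.ne_of_lt (Finset.mem_range.mp hk)), mul_zero]
      have e1 : S'.card + 1 - S'.card = 1 := by omega
      rw [hz, zero_add, ih S'.card le_rfl c, if_pos rfl, if_pos rfl,
        Finset.prod_insert ha, e1, pow_one, Nat.choose_succ_self_right,
        Nat.factorial_succ, pow_succ]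
      push_cast
      ring
    · rw [if_neg hns]
      have hn' : n ≤ S'.card := Nat.lt_succ_iff.mp (lt_of_le_of_ne hn hns)
      have hz : ∑ k ∈ Finset.range n, μ a ^ (n - k) * (n.choose k : R) *
          ∑ T ∈ S'.powerset, (-1 : R) ^ T.card * (c + ∑ j ∈ T, μ j) ^ k = 0 := by
        refine Finset.sum_eq_zero fun k hk => ?_
        have hk' : k < n := Finset.mem_range.mp hk
        rw [ih k (le_trans (le_of_lt hk') hn') c, if_neg
          (Nat.ne_of_lt (lt_of_lt_of_le hk' hn')), mul_zero]
      rw [hz, neg_zero]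

theorem stmt2 {R : Type*} [CommRing R] (r s : ℕ) (hr : 1 ≤ r) (hrs : r ≤ s)
    (μ : Fin s → R) :
    ∑ i ∈ Finset.Icc (s - r) s, (-1 : R) ^ i * (i.choose (s - r)) *
        ∑ J ∈ Finset.powersetCard i (Finset.univ : Finset (Fin s)),
          (∑ j ∈ J, μ j) ^ r
      = (-1 : R) ^ s * (r.factorial : R) *
        ∑ J ∈ Finset.powersetCard r (Finset.univ : Finset (Fin s)),
          ∏ j ∈ J, μ j := by
  classical
  -- Step 1: extend the sum from `Icc (s-r) s` to `range (s+1)`.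
  have h1 : ∑ i ∈ Finset.Icc (s - r) s, (-1 : R) ^ i * (i.choose (s - r)) *
        ∑ J ∈ Finset.powersetCard i (Finset.univ : Finset (Fin s)), (∑ j ∈ J, μ j) ^ r
      = ∑ i ∈ Finset.range (s + 1), (-1 : R) ^ i * (i.choose (s - r)) *
        ∑ J ∈ Finset.powersetCard i (Finset.univ : Finset (Fin s)), (∑ j ∈ J, μ j) ^ r := by
    refine Finset.sum_subset (fun i hi => ?_) (fun i hi hni => ?_)
    · exact Finset.mem_range.mpr (Nat.lt_succ_of_le (Finset.mem_Icc.mp hi).2)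
    · have : i < s - r := by
        rcases lt_or_ge i (s - r) with h | h
        · exact h
        · exact absurd (Finset.mem_Icc.mpr ⟨h, Nat.lt_succ_iff.mp (Finset.mem_range.mp hi)⟩)
            hni
      rw [Nat.choose_eq_zero_of_lt this, Nat.cast_zero, mul_zero, zero_mul]
  rw [h1]
  -- Step 2: turn the double sum into a single sum over the powerset.
  have h2 : ∑ i ∈ Finset.range (s + 1), (-1 : R) ^ i * (i.choose (s - r)) *
        ∑ J ∈ Finset.powersetCard i (Finset.univ : Finset (Fin s)), (∑ j ∈ J, μ j) ^ r
      = ∑ J ∈ (Finset.univ : Finset (Fin s)).powerset,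
          (-1 : R) ^ J.card * (J.card.choose (s - r)) * (∑ j ∈ J, μ j) ^ r := by
    rw [Finset.sum_powerset]
    simp only [Finset.card_univ, Fintype.card_fin]
    refine Finset.sum_congr rfl fun i _ => ?_
    rw [Finset.mul_sum]
    refine Finset.sum_congr rfl fun J hJ => ?_
    rw [(Finset.mem_powersetCard.mp hJ).2]
  rw [h2]
  -- Step 3: rewrite the binomial coefficient as counting subsets of size `s-r`.
  have h3 : ∀ J : Finset (Fin s),
      (-1 : R) ^ J.card * (J.card.choose (s - r)) * (∑ j ∈ J, μ j) ^ r
        = ∑ K ∈ Finset.powersetCard (s - r) J, (-1 : R) ^ J.card * (∑ j ∈ J, μ j) ^ r := by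
    intro J
    rw [Finset.sum_const, Finset.card_powersetCard, nsmul_eq_mul]
    ring
  rw [Finset.sum_congr rfl fun J _ => h3 J]
  -- Step 4: swap the order of summation.
  rw [Finset.sum_comm' (t' := Finset.powersetCard (s - r) (Finset.univ : Finset (Fin s)))
    (s' := fun K => (Finset.univ : Finset (Fin s)).powerset.filter (K ⊆ ·))
    (fun J K => by
      simp only [Finset.mem_powerset, Finset.mem_powersetCard, Finset.mem_filter,
        Finset.subset_univ, true_and])]
  -- Step 5: evaluate the inner sum for each `K` using the key lemma.
  have h5 : ∀ K ∈ Finset.powersetCard (s - r) (Finset.univ : Finset (Fin s)),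
      ∑ J ∈ (Finset.univ : Finset (Fin s)).powerset.filter (K ⊆ ·),
          (-1 : R) ^ J.card * (∑ j ∈ J, μ j) ^ r
        = (-1 : R) ^ s * (r.factorial : R) * ∏ j ∈ Kᶜ, μ j := by
    intro K hK
    have hKcard : K.card = s - r := (Finset.mem_powersetCard.mp hK).2
    have hKc : Kᶜ.card = r := by
      rw [Finset.card_compl, hKcard, Fintype.card_fin, Nat.sub_sub_self hrs]
    have hre : ∑ J ∈ (Finset.univ : Finset (Fin s)).powerset.filter (K ⊆ ·),
        (-1 : R) ^ J.card * (∑ j ∈ J, μ j) ^ r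
      = ∑ T ∈ Kᶜ.powerset, (-1 : R) ^ K.card *
          ((-1 : R) ^ T.card * ((∑ j ∈ K, μ j) + ∑ j ∈ T, μ j) ^ r) := by
      refine Finset.sum_nbij' (fun J => J \ K) (fun T => K ∪ T) ?_ ?_ ?_ ?_ ?_
      · intro J hJ
        rw [Finset.mem_filter] at hJ
        rw [Finset.mem_powerset]
        intro x hx
        rw [Finset.mem_compl]
        exact (Finset.mem_sdiff.mp hx).2
      · intro T hT
        rw [Finset.mem_filter, Finset.mem_powerset]
        exact ⟨Finset.subset_univ _, Finset.subset_union_left⟩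
      · intro J hJ
        rw [Finset.mem_filter] at hJ
        show K ∪ (J \ K) = J
        exact Finset.union_sdiff_of_subset hJ.2
      · intro T hT
        rw [Finset.mem_powerset] at hT
        have hd : Disjoint K T := Finset.disjoint_left.mpr fun x hxK hxT =>
          (Finset.mem_compl.mp (hT hxT)) hxK
        show (K ∪ T) \ K = T
        exact Finset.union_sdiff_cancel_left hd
      · intro J hJ
        rw [Finset.mem_filter] at hJ
        have hd : Disjoint K (J \ K) := Finset.disjoint_sdiff
        have hcard : J.card = K.card + (J \ K).card := by
          rw [← Finset.card_union_of_disjoint hd, Finset.union_sdiff_of_subset hJ.2]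
        have hsum : ∑ j ∈ J, μ j = (∑ j ∈ K, μ j) + ∑ j ∈ J \ K, μ j := by
          rw [← Finset.sum_union hd, Finset.union_sdiff_of_subset hJ.2]
        show (-1 : R) ^ J.card * (∑ j ∈ J, μ j) ^ r
          = (-1 : R) ^ K.card * ((-1 : R) ^ (J \ K).card *
              ((∑ j ∈ K, μ j) + ∑ j ∈ J \ K, μ j) ^ r)
        rw [hcard, hsum, pow_add]
        ring
    rw [hre, ← Finset.mul_sum]
    rw [key_diff Kᶜ μ r (le_of_eq hKc.symm) (∑ j ∈ K, μ j), if_pos hKc.symm, hKc, hKcard]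
    rw [← mul_assoc, ← mul_assoc, ← pow_add, Nat.sub_add_cancel hrs]
  rw [Finset.sum_congr rfl h5]
  -- Step 6: reindex by complement.
  rw [Finset.mul_sum]
  refine Finset.sum_nbij' (fun K => Kᶜ) (fun J => Jᶜ) ?_ ?_ ?_ ?_ ?_
  · intro K hK
    have hKcard : K.card = s - r := (Finset.mem_powersetCard.mp hK).2
    rw [Finset.mem_powersetCard]
    exact ⟨Finset.subset_univ _, by
      rw [Finset.card_compl, hKcard, Fintype.card_fin, Nat.sub_sub_self hrs]⟩
  · intro J hJ
    have hJcard : J.card = r := (Finset.mem_powersetCard.mp hJ).2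
    rw [Finset.mem_powersetCard]
    exact ⟨Finset.subset_univ _, by
      rw [Finset.card_compl, hJcard, Fintype.card_fin]⟩
  · intro K _; exact compl_compl K
  · intro J _; exact compl_compl J
  · intro K _; rfl
end

section
/- Let $1 \le \ell < r \le s$ be integers and let $\mu_1, \dots, \mu_s$ be elements of a commutative ring. Then $\sum_{i=s-r}^{s} (-1)^i \binom{i}{s-r} \sum_{1 \le j_1 < \cdots < j_i \le s} \left( \sum_{e=1}^{i} \mu_{j_e} \right)^\ell = 0$. -/
open Finset

/-- Alternating sum over subsets of `S` of `(a + ∑_{j ∈ T} x j)^ℓ` vanishes when `ℓ < #S`. -/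
lemma alt_sum_pow {R : Type*} [CommRing R] {ι : Type*} [DecidableEq ι] (S : Finset ι) :
    ∀ (ℓ : ℕ) (x : ι → R) (a : R), ℓ < S.card →
      ∑ T ∈ S.powerset, (-1 : R) ^ T.card * (a + ∑ j ∈ T, x j) ^ ℓ = 0 := by
  induction S using Finset.cons_induction with
  | empty => intro ℓ x a h; simp at h
  | cons u S' hu IH =>
    intro ℓ x a hℓ
    rw [Finset.cons_eq_insert, Finset.sum_powerset_insert hu]
    have hcard : ℓ ≤ S'.card := by
      have := hℓ; rw [Finset.card_cons] at this; omega
    have hstep : ∀ T ∈ S'.powerset,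
        (-1 : R) ^ (insert u T).card * (a + ∑ j ∈ insert u T, x j) ^ ℓ
          = -((-1 : R) ^ T.card * ((a + ∑ j ∈ T, x j) + x u) ^ ℓ) := by
      intro T hT
      have huT : u ∉ T := fun h => hu (Finset.mem_powerset.mp hT h)
      rw [Finset.card_insert_of_notMem huT, Finset.sum_insert huT]
      ring
    rw [Finset.sum_congr rfl hstep]
    have hexp : ∀ T : Finset ι,
        ((a + ∑ j ∈ T, x j) + x u) ^ ℓ
          = ∑ k ∈ Finset.range (ℓ + 1),
              (a + ∑ j ∈ T, x j) ^ k * x u ^ (ℓ - k) * (ℓ.choose k : R) := by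
      intro T; exact add_pow _ _ _
    simp_rw [hexp, Finset.mul_sum, Finset.sum_neg_distrib]
    rw [Finset.sum_comm]
    have hzero : ∀ k ∈ Finset.range ℓ,
        ∑ T ∈ S'.powerset,
            (-1 : R) ^ T.card * ((a + ∑ j ∈ T, x j) ^ k * x u ^ (ℓ - k) * (ℓ.choose k : R))
          = 0 := by
      intro k hk
      have hk' : k < S'.card := lt_of_lt_of_le (Finset.mem_range.mp hk) hcard
      have := IH k x a hk'
      calc ∑ T ∈ S'.powerset,
              (-1 : R) ^ T.card * ((a + ∑ j ∈ T, x j) ^ k * x u ^ (ℓ - k) * (ℓ.choose k : R))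
          = (∑ T ∈ S'.powerset, (-1 : R) ^ T.card * (a + ∑ j ∈ T, x j) ^ k)
              * (x u ^ (ℓ - k) * (ℓ.choose k : R)) := by
            rw [Finset.sum_mul]; exact Finset.sum_congr rfl fun T _ => by ring
        _ = 0 := by rw [this, zero_mul]
    rw [Finset.sum_range_succ, Finset.sum_congr rfl hzero]
    simp [Finset.mul_sum]

theorem stmt3 {R : Type*} [CommRing R] (ℓ r s : ℕ) (hℓ : 1 ≤ ℓ) (hℓr : ℓ < r)
    (hrs : r ≤ s) (μ : Fin s → R) :
    ∑ i ∈ Finset.Icc (s - r) s, (-1 : R) ^ i * (i.choose (s - r)) *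
        ∑ J ∈ Finset.powersetCard i (Finset.univ : Finset (Fin s)),
          (∑ j ∈ J, μ j) ^ ℓ
      = 0 := by
  classical
  set U : Finset (Fin s) := Finset.univ
  -- Step 1: extend to range (s+1)
  have h1 : ∑ i ∈ Finset.Icc (s - r) s, (-1 : R) ^ i * (i.choose (s - r)) *
        ∑ J ∈ Finset.powersetCard i U, (∑ j ∈ J, μ j) ^ ℓ
      = ∑ i ∈ Finset.range (s + 1), (-1 : R) ^ i * (i.choose (s - r)) *
        ∑ J ∈ Finset.powersetCard i U, (∑ j ∈ J, μ j) ^ ℓ := by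
    apply Finset.sum_subset
    · intro i hi
      simp only [Finset.mem_Icc] at hi
      simp [Nat.lt_succ_iff, hi.2]
    · intro i hi hni
      simp only [Finset.mem_range, Finset.mem_Icc, not_and, not_le] at hi hni
      have : i < s - r := by
        by_contra h
        exact absurd (Nat.lt_succ_iff.mp hi) (Nat.not_le.mpr (hni (Nat.le_of_not_lt h)))
      rw [Nat.choose_eq_zero_of_lt this]
      simp
  rw [h1]
  -- Step 2: rewrite choose as a cardinality, fold double sum into powerset sum
  have h2 : ∀ i ∈ Finset.range (s + 1),
      (-1 : R) ^ i * (i.choose (s - r)) *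
          ∑ J ∈ Finset.powersetCard i U, (∑ j ∈ J, μ j) ^ ℓ
        = ∑ J ∈ Finset.powersetCard i U,
            ∑ K ∈ Finset.powersetCard (s - r) J, (-1 : R) ^ J.card * (∑ j ∈ J, μ j) ^ ℓ := by
    intro i _
    rw [Finset.mul_sum]
    apply Finset.sum_congr rfl
    intro J hJ
    have hJc : J.card = i := (Finset.mem_powersetCard.mp hJ).2
    rw [Finset.sum_const, Finset.card_powersetCard, hJc]
    push_cast
    ring
  rw [Finset.sum_congr rfl h2]
  have hUcard : U.card = s := by simp [U]
  have h3 := Finset.sum_powerset U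
    (fun J => ∑ K ∈ Finset.powersetCard (s - r) J, (-1 : R) ^ J.card * (∑ j ∈ J, μ j) ^ ℓ)
  rw [hUcard] at h3
  rw [← h3]
  -- Step 3: swap the sums
  rw [Finset.sum_comm' (t' := Finset.powersetCard (s - r) U)
      (s' := fun K => Finset.filter (fun J => K ⊆ J) U.powerset)
      (by
        intro J K
        simp only [Finset.mem_powerset, Finset.mem_powersetCard, Finset.mem_filter]
        constructor
        · rintro ⟨hJ, hKJ, hKc⟩
          exact ⟨⟨hJ, hKJ⟩, hKJ.trans hJ, hKc⟩
        · rintro ⟨⟨hJ, hKJ⟩, _, hKc⟩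
          exact ⟨hJ, hKJ, hKc⟩)]
  -- Step 4: inner sum vanishes
  apply Finset.sum_eq_zero
  intro K hK
  obtain ⟨hKU, hKcard⟩ := Finset.mem_powersetCard.mp hK
  -- reindex J = K ∪ T, T ⊆ U \ K
  have hbij : ∑ J ∈ Finset.filter (fun J => K ⊆ J) U.powerset,
      (-1 : R) ^ J.card * (∑ j ∈ J, μ j) ^ ℓ
      = ∑ T ∈ (U \ K).powerset,
          (-1 : R) ^ K.card * ((-1 : R) ^ T.card * ((∑ j ∈ K, μ j) + ∑ j ∈ T, μ j) ^ ℓ) := by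
    apply Finset.sum_nbij' (i := fun J => J \ K) (j := fun T => K ∪ T)
    · intro J hJ
      simp only [Finset.mem_filter, Finset.mem_powerset] at hJ
      exact Finset.mem_powerset.mpr (Finset.sdiff_subset_sdiff hJ.1 le_rfl)
    · intro T hT
      simp only [Finset.mem_powerset] at hT
      refine Finset.mem_filter.mpr ⟨Finset.mem_powerset.mpr ?_, Finset.subset_union_left⟩
      exact Finset.union_subset hKU (hT.trans (Finset.sdiff_subset))
    · intro J hJ
      simp only [Finset.mem_filter, Finset.mem_powerset] at hJ
      exact Finset.union_sdiff_of_subset hJ.2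
    · intro T hT
      simp only [Finset.mem_powerset] at hT
      have hdisj : Disjoint K T :=
        Finset.disjoint_left.mpr fun a haK haT =>
          (Finset.mem_sdiff.mp (hT haT)).2 haK
      rw [Finset.union_sdiff_cancel_left hdisj]
    · intro J hJ
      simp only [Finset.mem_filter, Finset.mem_powerset] at hJ
      have hdisj : Disjoint K (J \ K) := Finset.disjoint_sdiff
      have hc : J.card = K.card + (J \ K).card := by
        rw [← Finset.card_union_of_disjoint hdisj, Finset.union_sdiff_of_subset hJ.2]
      have hs : ∑ j ∈ J, μ j = ∑ j ∈ K, μ j + ∑ j ∈ (J \ K), μ j := by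
        rw [← Finset.sum_union hdisj, Finset.union_sdiff_of_subset hJ.2]
      rw [hc, hs, pow_add]
      ring
  rw [hbij, ← Finset.mul_sum]
  have hcard : ℓ < (U \ K).card := by
    rw [Finset.card_sdiff_of_subset hKU, hUcard, hKcard]
    omega
  rw [alt_sum_pow (U \ K) ℓ μ (∑ j ∈ K, μ j) hcard, mul_zero]
end

section
/- Let $1 \le r < s$ be integers and let $\mu_1, \dots, \mu_s$ be positive integers. Then $\sum_{i=s-r}^{s} (-1)^i \binom{i}{s-r} \sum_{1 \le j_1 < \cdots < j_i \le s} \binom{\sum_{e=1}^{i} \mu_{j_e} - 1}{r} = (-1)^s \, e_r(\mu_1, \dots, \mu_s)$. -/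
open Polynomial Finset

namespace Stmt4Aux

lemma hasse_high {P : ℤ[X]} {k : ℕ} (h : P.natDegree ≤ k) :
    hasseDeriv k P = C (P.coeff k) := by
  ext j
  rw [hasseDeriv_coeff, coeff_C]
  rcases j with _ | j
  · simp
  · rw [P.coeff_eq_zero_of_natDegree_lt (by omega)]
    simp

lemma taylor_coeff_high {P : ℤ[X]} {k : ℕ} (c : ℤ) (h : P.natDegree ≤ k) :
    (taylor c P).coeff k = P.coeff k := by
  rw [taylor_coeff, hasse_high h, eval_C]

lemma hasse_sub1 {P : ℤ[X]} {n : ℕ} (h : P.natDegree ≤ n + 1) :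
    hasseDeriv n P = C (P.coeff n) + C ((n + 1 : ℤ) * P.coeff (n + 1)) * X := by
  ext j
  rw [hasseDeriv_coeff]
  rcases j with _ | j
  · simp
  rcases j with _ | j
  · simp only [coeff_add, coeff_C, coeff_C_mul, coeff_X_one, if_neg one_ne_zero, zero_add,
      mul_one]
    rw [show 1 + n = n + 1 from by omega, Nat.choose_succ_self_right]
    push_cast; ring
  · rw [P.coeff_eq_zero_of_natDegree_lt (by omega)]
    simp only [coeff_add, coeff_C, coeff_C_mul, coeff_X, mul_zero]
    norm_num

lemma diff_natDegree {n : ℕ} (c : ℤ) (P : ℤ[X]) (h : P.natDegree ≤ n + 1) :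
    (P - taylor c P).natDegree ≤ n := by
  apply natDegree_le_iff_coeff_eq_zero.mpr
  intro m hm
  rw [coeff_sub, taylor_coeff_high c (le_trans h hm), sub_self]

lemma diff_coeff {n : ℕ} (c : ℤ) (P : ℤ[X]) (h : P.natDegree ≤ n + 1) :
    (P - taylor c P).coeff n = -((n + 1 : ℤ) * c * P.coeff (n + 1)) := by
  rw [coeff_sub, taylor_coeff, hasse_sub1 h]
  simp only [eval_add, eval_mul, eval_C, eval_X]
  ring

lemma diff_sum {α : Type*} [DecidableEq α] (T : Finset α) (μ : α → ℤ) :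
    ∀ (P : ℤ[X]), P.natDegree ≤ T.card → ∀ x : ℤ,
    ∑ L ∈ T.powerset, (-1 : ℤ) ^ L.card * P.eval (x + ∑ t ∈ L, μ t)
      = (-1) ^ T.card * (T.card.factorial : ℤ) * P.coeff T.card * ∏ t ∈ T, μ t := by
  induction T using Finset.induction_on with
  | empty =>
    intro P hP x
    simp only [Finset.card_empty] at hP ⊢
    rw [eq_C_of_natDegree_le_zero hP]
    simp
  | @insert a T' ha ih =>
    intro P hP x
    rw [Finset.card_insert_of_notMem ha] at hP ⊢
    rw [Finset.sum_powerset_insert ha]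
    have step : ∀ L ∈ T'.powerset,
        (-1 : ℤ) ^ (insert a L).card * P.eval (x + ∑ t ∈ insert a L, μ t)
          = -((-1 : ℤ) ^ L.card * (taylor (μ a) P).eval (x + ∑ t ∈ L, μ t)) := by
      intro L hL
      have haL : a ∉ L := fun hx => ha (Finset.mem_powerset.mp hL hx)
      rw [Finset.card_insert_of_notMem haL, Finset.sum_insert haL, taylor_eval]
      ring_nf
    rw [Finset.sum_congr rfl step, Finset.sum_neg_distrib, ← sub_eq_add_neg,
      ← Finset.sum_sub_distrib]
    have combine : ∀ L ∈ T'.powerset,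
        (-1 : ℤ) ^ L.card * P.eval (x + ∑ t ∈ L, μ t) -
            (-1 : ℤ) ^ L.card * (taylor (μ a) P).eval (x + ∑ t ∈ L, μ t)
          = (-1 : ℤ) ^ L.card * (P - taylor (μ a) P).eval (x + ∑ t ∈ L, μ t) := by
      intro L _
      rw [eval_sub]; ring
    rw [Finset.sum_congr rfl combine, ih (P - taylor (μ a) P) (diff_natDegree _ _ hP),
      diff_coeff _ _ hP, Finset.prod_insert ha, Nat.factorial_succ]
    push_cast
    ring

end Stmt4Aux

namespace Stmt4Aux
open Polynomial Finset

lemma key {α : Type*} [DecidableEq α] (T : Finset α) (r : ℕ) (hT : T.card = r)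
    (μ : α → ℕ) (c : ℕ) (hc : 1 ≤ c) :
    ∑ L ∈ T.powerset, (-1 : ℤ) ^ L.card * ((c + ∑ t ∈ L, μ t - 1).choose r : ℤ)
      = (-1) ^ r * ∏ t ∈ T, (μ t : ℤ) := by
  set P : ℤ[X] := taylor ((c : ℤ) - 1) (descPochhammer ℤ r) with hPdef
  have hdeg : P.natDegree = r := by
    rw [hPdef, natDegree_taylor, descPochhammer_natDegree]
  have hcoeff : P.coeff r = 1 := by
    rw [hPdef, taylor_coeff_high _ (le_of_eq (descPochhammer_natDegree (R := ℤ) r))]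
    have := (monic_descPochhammer ℤ r).coeff_natDegree
    rwa [descPochhammer_natDegree] at this
  have hfac : (r.factorial : ℤ) ≠ 0 := Int.natCast_ne_zero.mpr r.factorial_ne_zero
  apply mul_left_cancel₀ hfac
  rw [Finset.mul_sum]
  have heval : ∀ L ∈ T.powerset,
      (r.factorial : ℤ) * ((-1 : ℤ) ^ L.card * ((c + ∑ t ∈ L, μ t - 1).choose r : ℤ))
        = (-1 : ℤ) ^ L.card * P.eval (0 + ∑ t ∈ L, (μ t : ℤ)) := by
    intro L _
    have h1 : (1 : ℕ) ≤ c + ∑ t ∈ L, μ t := le_trans hc (Nat.le_add_right _ _)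
    have he : P.eval (0 + ∑ t ∈ L, (μ t : ℤ))
        = ((c + ∑ t ∈ L, μ t - 1).descFactorial r : ℤ) := by
      rw [hPdef, taylor_eval]
      have harg : (0 : ℤ) + ∑ t ∈ L, (μ t : ℤ) + ((c : ℤ) - 1)
          = (((c + ∑ t ∈ L, μ t - 1 : ℕ)) : ℤ) := by
        rw [Nat.cast_sub h1]
        push_cast
        ring
      rw [harg, descPochhammer_eval_eq_descFactorial]
    rw [he, Nat.descFactorial_eq_factorial_mul_choose]
    push_cast
    ring
  rw [Finset.sum_congr rfl heval, diff_sum T _ P (by rw [hdeg, hT]) 0, hT, hcoeff]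
  ring

end Stmt4Aux


open Stmt4Aux Polynomial Finset in
theorem stmt4 (r s : ℕ) (hr : 1 ≤ r) (hrs : r < s) (μ : Fin s → ℕ)
    (hμ : ∀ j, 1 ≤ μ j) :
    ∑ i ∈ Finset.Icc (s - r) s, (-1 : ℤ) ^ i * (i.choose (s - r)) *
        ∑ J ∈ Finset.powersetCard i (Finset.univ : Finset (Fin s)),
          (((∑ j ∈ J, μ j) - 1).choose r : ℤ)
      = (-1 : ℤ) ^ s *
        ∑ J ∈ Finset.powersetCard r (Finset.univ : Finset (Fin s)),
          ∏ j ∈ J, (μ j : ℤ) := by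
  classical
  have hcard : (Finset.univ : Finset (Fin s)).card = s := by simp
  set ch : Finset (Fin s) → ℤ := fun J => (((∑ j ∈ J, μ j) - 1).choose r : ℤ) with hch
  -- Step A : collapse to a single sum over the full powerset
  have e1 : ∑ J ∈ (Finset.univ : Finset (Fin s)).powerset,
        (-1 : ℤ) ^ J.card * (J.card.choose (s - r)) * ch J
      = ∑ i ∈ Finset.range (s + 1), (-1 : ℤ) ^ i * (i.choose (s - r)) *
          ∑ J ∈ Finset.powersetCard i (Finset.univ : Finset (Fin s)), ch J := by
    rw [Finset.sum_powerset, hcard]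
    apply Finset.sum_congr rfl
    intro i _
    rw [Finset.mul_sum]
    exact Finset.sum_congr rfl fun J hJ => by rw [(Finset.mem_powersetCard.mp hJ).2]
  have e2 : ∑ i ∈ Finset.Icc (s - r) s, (-1 : ℤ) ^ i * (i.choose (s - r)) *
        ∑ J ∈ Finset.powersetCard i (Finset.univ : Finset (Fin s)), ch J
      = ∑ i ∈ Finset.range (s + 1), (-1 : ℤ) ^ i * (i.choose (s - r)) *
          ∑ J ∈ Finset.powersetCard i (Finset.univ : Finset (Fin s)), ch J := by
    apply Finset.sum_subset
    · intro i hi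
      simp only [Finset.mem_Icc] at hi
      simp only [Finset.mem_range]
      omega
    · intro i hi hni
      simp only [Finset.mem_range] at hi
      simp only [Finset.mem_Icc] at hni
      have : i < s - r := by omega
      rw [Nat.choose_eq_zero_of_lt this]
      simp
  -- Step B/C : introduce subsets K of size s-r and swap
  have e3 : ∑ J ∈ (Finset.univ : Finset (Fin s)).powerset,
        (-1 : ℤ) ^ J.card * (J.card.choose (s - r)) * ch J
      = ∑ K ∈ Finset.powersetCard (s - r) (Finset.univ : Finset (Fin s)),
          ∑ J ∈ (Finset.univ : Finset (Fin s)).powerset,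
            (if K ⊆ J then (-1 : ℤ) ^ J.card * ch J else 0) := by
    rw [Finset.sum_comm]
    apply Finset.sum_congr rfl
    intro J _
    have hc2 : (J.card.choose (s - r) : ℤ)
        = ∑ K ∈ Finset.powersetCard (s - r) (Finset.univ : Finset (Fin s)),
            (if K ⊆ J then (1 : ℤ) else 0) := by
      rw [← Finset.sum_filter]
      have : (Finset.powersetCard (s - r) (Finset.univ : Finset (Fin s))).filter (· ⊆ J)
          = Finset.powersetCard (s - r) J := by
        ext K
        simp only [Finset.mem_filter, Finset.mem_powersetCard]
        constructor
        · rintro ⟨⟨-, h2⟩, h3⟩; exact ⟨h3, h2⟩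
        · rintro ⟨h1, h2⟩; exact ⟨⟨Finset.subset_univ K, h2⟩, h1⟩
      rw [this]
      simp [Finset.card_powersetCard]
    rw [hc2, Finset.mul_sum, Finset.sum_mul]
    apply Finset.sum_congr rfl
    intro K _
    by_cases h : K ⊆ J <;> simp [h]
  -- Step D : inner sum for fixed K
  have e4 : ∀ K ∈ Finset.powersetCard (s - r) (Finset.univ : Finset (Fin s)),
      ∑ J ∈ (Finset.univ : Finset (Fin s)).powerset,
          (if K ⊆ J then (-1 : ℤ) ^ J.card * ch J else 0)
        = (-1 : ℤ) ^ s * ∏ t ∈ (Finset.univ \ K), (μ t : ℤ) := by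
    intro K hK
    obtain ⟨-, hKcard⟩ := Finset.mem_powersetCard.mp hK
    have hKcompl : (Finset.univ \ K).card = r := by
      rw [Finset.card_sdiff_of_subset (Finset.subset_univ K), hcard, hKcard]
      omega
    have hKne : K.Nonempty := Finset.card_pos.mp (by omega)
    have hc1 : 1 ≤ ∑ t ∈ K, μ t := by
      obtain ⟨k, hk⟩ := hKne
      calc 1 ≤ μ k := hμ k
        _ ≤ ∑ t ∈ K, μ t := Finset.single_le_sum (fun i _ => Nat.zero_le _) hk
    rw [← Finset.sum_filter]
    have reindex : ∑ J ∈ ((Finset.univ : Finset (Fin s)).powerset).filter (fun J => K ⊆ J),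
          (-1 : ℤ) ^ J.card * ch J
        = ∑ L ∈ (Finset.univ \ K).powerset,
            (-1 : ℤ) ^ (s - r) * ((-1 : ℤ) ^ L.card *
              (((∑ t ∈ K, μ t) + ∑ t ∈ L, μ t - 1).choose r : ℤ)) := by
      apply Finset.sum_nbij' (fun J => J \ K) (fun L => K ∪ L)
      · intro J hJ
        simp only [Finset.mem_filter, Finset.mem_powerset] at hJ
        exact Finset.mem_powerset.mpr (Finset.sdiff_subset_sdiff hJ.1 (Finset.Subset.refl _))
      · intro L hL
        simp only [Finset.mem_powerset] at hL
        simp only [Finset.mem_filter, Finset.mem_powerset]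
        exact ⟨Finset.subset_univ _, Finset.subset_union_left⟩
      · intro J hJ
        simp only [Finset.mem_filter, Finset.mem_powerset] at hJ
        rw [Finset.union_comm, Finset.sdiff_union_of_subset hJ.2]
      · intro L hL
        simp only [Finset.mem_powerset] at hL
        have hdisj : Disjoint K L := Finset.disjoint_left.mpr
          (fun {x} hx1 hx2 => (Finset.mem_sdiff.mp (hL hx2)).2 hx1)
        exact Finset.union_sdiff_cancel_left hdisj
      · intro J hJ
        simp only [Finset.mem_filter, Finset.mem_powerset] at hJ
        have hdisj : Disjoint K (J \ K) := Finset.disjoint_sdiff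
        have hJeq : J = K ∪ (J \ K) := by
          rw [Finset.union_comm, Finset.sdiff_union_of_subset hJ.2]
        have hcardJ : J.card = (s - r) + (J \ K).card := by
          conv_lhs => rw [hJeq]
          rw [Finset.card_union_of_disjoint hdisj, hKcard]
        have hsum : ∑ j ∈ J, μ j = (∑ t ∈ K, μ t) + ∑ t ∈ J \ K, μ t := by
          conv_lhs => rw [hJeq]
          rw [Finset.sum_union hdisj]
        rw [hch]
        simp only
        rw [hcardJ, hsum, pow_add]
        ring
    rw [reindex, ← Finset.mul_sum,
      key (Finset.univ \ K) r hKcompl μ (∑ t ∈ K, μ t) hc1, ← mul_assoc, ← pow_add]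
    congr 2
    omega
  -- Step E : reindex K ↦ complement
  have e5 : ∑ K ∈ Finset.powersetCard (s - r) (Finset.univ : Finset (Fin s)),
        (-1 : ℤ) ^ s * ∏ t ∈ (Finset.univ \ K), (μ t : ℤ)
      = (-1 : ℤ) ^ s * ∑ J ∈ Finset.powersetCard r (Finset.univ : Finset (Fin s)),
          ∏ j ∈ J, (μ j : ℤ) := by
    rw [← Finset.mul_sum]
    congr 1
    apply Finset.sum_nbij' (fun K => Finset.univ \ K) (fun J => Finset.univ \ J)
    · intro K hK
      obtain ⟨-, hKcard⟩ := Finset.mem_powersetCard.mp hK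
      refine Finset.mem_powersetCard.mpr ⟨Finset.subset_univ _, ?_⟩
      rw [Finset.card_sdiff_of_subset (Finset.subset_univ K), hcard, hKcard]
      omega
    · intro J hJ
      obtain ⟨-, hJcard⟩ := Finset.mem_powersetCard.mp hJ
      refine Finset.mem_powersetCard.mpr ⟨Finset.subset_univ _, ?_⟩
      rw [Finset.card_sdiff_of_subset (Finset.subset_univ J), hcard, hJcard]
    · intro K _
      simp [Finset.sdiff_sdiff_self_left]
    · intro J _
      simp [Finset.sdiff_sdiff_self_left]
    · intro K _
      rfl
  rw [e2, ← e1, e3, Finset.sum_congr rfl e4, e5]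
end

section
/- Let $r \ge 1$ be an integer and let $\mu_1, \dots, \mu_r$ be positive integers. Then $1 + \sum_{i=0}^{r} (-1)^{i+r} \sum_{1 \le j_1 < \cdots < j_i \le r} \binom{\sum_{e=1}^{i} \mu_{j_e} - 1}{r} = \mu_1 \mu_2 \cdots \mu_r$. -/
open Finset

lemma chooseDiff (k : ℕ) (μ : ℕ) (x : ℤ) :
    Ring.choose (x + μ) (k + 1) - Ring.choose x (k + 1)
      = ∑ u ∈ range μ, Ring.choose (x + u) k := by
  induction μ with
  | zero => simp
  | succ m ih =>
    rw [Finset.sum_range_succ, ← ih]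
    have h : (x + (m + 1 : ℕ) : ℤ) = (x + m) + 1 := by push_cast; ring
    rw [h, Ring.choose_succ_succ]
    ring

lemma keyIE {ι : Type*} [DecidableEq ι] (s : Finset ι) (μ : ι → ℕ) :
    ∀ t : ℤ, ∑ J ∈ s.powerset,
        (-1 : ℤ) ^ (s.card - J.card) * Ring.choose (t + ∑ j ∈ J, (μ j : ℤ)) s.card
      = ∏ j ∈ s, (μ j : ℤ) := by
  induction s using Finset.induction_on with
  | empty => intro t; simp [Ring.choose_zero_right]
  | @insert a s ha ih =>
    intro t
    rw [Finset.sum_powerset_insert ha, Finset.card_insert_of_notMem ha]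
    have hsum : ∀ J ∈ s.powerset,
        (-1 : ℤ) ^ (s.card + 1 - J.card) *
            Ring.choose (t + ∑ j ∈ J, (μ j : ℤ)) (s.card + 1)
          +
          (-1 : ℤ) ^ (s.card + 1 - (insert a J).card) *
            Ring.choose (t + ∑ j ∈ insert a J, (μ j : ℤ)) (s.card + 1)
        = ∑ u ∈ range (μ a),
            (-1 : ℤ) ^ (s.card - J.card) *
              Ring.choose ((t + u) + ∑ j ∈ J, (μ j : ℤ)) s.card := by
      intro J hJ
      rw [Finset.mem_powerset] at hJ
      have haJ : a ∉ J := fun h => ha (hJ h)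
      have hcard : J.card ≤ s.card := Finset.card_le_card hJ
      rw [Finset.card_insert_of_notMem haJ, Finset.sum_insert haJ]
      have h1 : s.card + 1 - J.card = (s.card - J.card) + 1 := by omega
      have h2 : s.card + 1 - (J.card + 1) = s.card - J.card := by omega
      rw [h1, h2, pow_succ]
      have h3 : (t + ((μ a : ℤ) + ∑ j ∈ J, (μ j : ℤ)))
          = (t + ∑ j ∈ J, (μ j : ℤ)) + (μ a : ℕ) := by push_cast; ring
      rw [h3]
      rw [show ∀ A B C : ℤ, A * -1 * B + A * C = A * (C - B) by intros; ring]
      rw [chooseDiff s.card (μ a) (t + ∑ j ∈ J, (μ j : ℤ)), Finset.mul_sum]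
      refine Finset.sum_congr rfl fun u _ => ?_
      ring_nf
    rw [← Finset.sum_add_distrib] at *
    rw [Finset.sum_congr rfl hsum, Finset.sum_comm]
    have : ∀ u ∈ range (μ a),
        ∑ J ∈ s.powerset, (-1 : ℤ) ^ (s.card - J.card) *
            Ring.choose ((t + u) + ∑ j ∈ J, (μ j : ℤ)) s.card
          = ∏ j ∈ s, (μ j : ℤ) := fun u _ => ih (t + u)
    rw [Finset.sum_congr rfl this, Finset.sum_const, Finset.card_range,
      Finset.prod_insert ha]
    simp [mul_comm]

theorem stmt5 (r : ℕ) (hr : 1 ≤ r) (μ : Fin r → ℕ) (hμ : ∀ j, 1 ≤ μ j) :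
    1 + ∑ i ∈ Finset.range (r + 1), (-1 : ℤ) ^ (i + r) *
        ∑ J ∈ Finset.powersetCard i (Finset.univ : Finset (Fin r)),
          (((∑ j ∈ J, μ j) - 1).choose r : ℤ)
      = ∏ j, (μ j : ℤ) := by
  have key := keyIE (Finset.univ : Finset (Fin r)) μ (-1)
  have hcard : (Finset.univ : Finset (Fin r)).card = r := by simp
  rw [hcard] at key
  -- rewrite LHS double sum as a sum over the powerset
  have hsplit : ∑ i ∈ Finset.range (r + 1), (-1 : ℤ) ^ (i + r) *
        ∑ J ∈ Finset.powersetCard i (Finset.univ : Finset (Fin r)),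
          (((∑ j ∈ J, μ j) - 1).choose r : ℤ)
      = ∑ J ∈ (Finset.univ : Finset (Fin r)).powerset,
          (-1 : ℤ) ^ (J.card + r) * (((∑ j ∈ J, μ j) - 1).choose r : ℤ) := by
    rw [Finset.sum_powerset, hcard]
    refine Finset.sum_congr rfl fun i _ => ?_
    rw [Finset.mul_sum]
    refine Finset.sum_congr rfl fun J hJ => ?_
    rw [(Finset.mem_powersetCard.mp hJ).2]
  rw [hsplit, ← key]
  have hterm : ∀ J ∈ (Finset.univ : Finset (Fin r)).powerset,
      (-1 : ℤ) ^ (r - J.card) * Ring.choose (-1 + ∑ j ∈ J, (μ j : ℤ)) r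
        = (-1 : ℤ) ^ (J.card + r) * (((∑ j ∈ J, μ j) - 1).choose r : ℤ)
          + (if J = ∅ then 1 else 0) := by
    intro J _
    have hJr : J.card ≤ r := by
      simpa using Finset.card_le_card (Finset.subset_univ J)
    have hsign : (-1 : ℤ) ^ (r - J.card) = (-1 : ℤ) ^ (J.card + r) := by
      rw [show J.card + r = (r - J.card) + 2 * J.card by omega, pow_add, pow_mul]
      simp
    rcases eq_or_ne J ∅ with hJ | hJ
    · subst hJ
      simp only [Finset.sum_empty, Finset.card_empty, Nat.zero_sub,
        Nat.choose_zero_succ, if_pos rfl, add_zero]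
      have h0 : ((0 : ℕ) - 1).choose r = 0 := by
        simp [Nat.choose_eq_zero_of_lt (by omega : 0 < r)]
      have hc : Ring.choose (-1 : ℤ) r = (-1) ^ r := by
        have h1 : (-1 : ℤ) - r + 1 = -(r : ℤ) := by ring
        rw [Ring.choose, h1, Ring.multichoose_neg_self]
      rw [hc, h0]
      simp [hsign, ← pow_add]
    · have hpos : 1 ≤ ∑ j ∈ J, μ j := by
        obtain ⟨a, ha⟩ := Finset.nonempty_iff_ne_empty.mpr hJ
        calc 1 ≤ μ a := hμ a
        _ ≤ ∑ j ∈ J, μ j := Finset.single_le_sum (fun _ _ => Nat.zero_le _) ha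
      have hcast : (-1 : ℤ) + ∑ j ∈ J, (μ j : ℤ) = (((∑ j ∈ J, μ j) - 1 : ℕ) : ℤ) := by
        push_cast [Nat.cast_sub hpos]
        ring
      rw [hcast, Ring.choose_natCast, if_neg hJ, add_zero, hsign]
  rw [Finset.sum_congr rfl hterm, Finset.sum_add_distrib]
  rw [Finset.sum_ite_eq' _ ∅ (fun _ => (1 : ℤ)), if_pos (Finset.empty_mem_powerset _)]
  ring
end

section
/- Let $1 \le r < s$ be integers, let $\mu_1, \dots, \mu_s$ be positive integers, and define $m_i = \sum_{1 \le j_1 < \cdots < j_i \le s} \binom{\sum_{e=1}^i \mu_{j_e} - 1}{r}$ for each $0 \le i \le s$. Then $\sum_{i=s-r}^{s} (-1)^{s+i} \binom{i}{s-r} m_i = e_r(\mu_1,\dots,\mu_s)$, and in particular this quantity is a nonnegative integer. -/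
open Finset

private lemma negpow_eq (a b : ℕ) (h : a % 2 = b % 2) : (-1:ℤ)^a = (-1:ℤ)^b := by
  conv_lhs => rw [← Nat.div_add_mod a 2]
  conv_rhs => rw [← Nat.div_add_mod b 2]
  simp [pow_add, pow_mul, h]

private lemma vand (a b d : ℕ) :
    ((a + b).choose d : ℤ) = ∑ k ∈ range (d+1), ((a.choose k : ℤ) * (b.choose (d - k) : ℤ)) := by
  rw [Nat.add_choose_eq, Finset.Nat.sum_antidiagonal_eq_sum_range_succ_mk]
  push_cast
  rfl

/-- key difference lemma for binomial coefficients of subset sums -/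
private lemma Glem {ι : Type*} [DecidableEq ι] (μ : ι → ℕ) (S : Finset ι) :
    ∀ d ≤ S.card,
    ∑ L ∈ S.powerset, (-1:ℤ)^(S.card - L.card) * ((∑ j ∈ L, μ j).choose d : ℤ)
      = if d = S.card then ∏ j ∈ S, (μ j : ℤ) else 0 := by
  induction S using Finset.induction_on with
  | empty =>
    intro d hd
    simp at hd
    subst hd
    simp
  | @insert a T ha ih =>
    intro d hd
    rw [Finset.sum_powerset_insert ha]
    have hcard : (insert a T).card = T.card + 1 := Finset.card_insert_of_notMem ha
    have e1 : ∑ L ∈ T.powerset, (-1:ℤ)^((insert a T).card - L.card) * ((∑ j ∈ L, μ j).choose d : ℤ)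
        = ∑ L ∈ T.powerset, -((-1:ℤ)^(T.card - L.card) * ((∑ j ∈ L, μ j).choose d : ℤ)) := by
      refine Finset.sum_congr rfl fun L hL => ?_
      have hLc : L.card ≤ T.card := Finset.card_le_card (Finset.mem_powerset.mp hL)
      have : (insert a T).card - L.card = (T.card - L.card) + 1 := by omega
      rw [this, pow_succ]
      ring
    have e2 : ∑ L ∈ T.powerset, (-1:ℤ)^((insert a T).card - (insert a L).card) * ((∑ j ∈ insert a L, μ j).choose d : ℤ)
        = ∑ L ∈ T.powerset, (-1:ℤ)^(T.card - L.card) * ((μ a + ∑ j ∈ L, μ j).choose d : ℤ) := by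
      refine Finset.sum_congr rfl fun L hL => ?_
      have haL : a ∉ L := fun h => ha (Finset.mem_powerset.mp hL h)
      rw [Finset.sum_insert haL, Finset.card_insert_of_notMem haL, hcard]
      congr 2
      omega
    rw [e1, e2, ← Finset.sum_add_distrib]
    have key : ∀ L ∈ T.powerset,
        -((-1:ℤ)^(T.card - L.card) * ((∑ j ∈ L, μ j).choose d : ℤ))
          + (-1:ℤ)^(T.card - L.card) * ((μ a + ∑ j ∈ L, μ j).choose d : ℤ)
        = ∑ k ∈ range d, ((μ a).choose (k+1) : ℤ) *
            ((-1:ℤ)^(T.card - L.card) * ((∑ j ∈ L, μ j).choose (d - (k+1)) : ℤ)) := by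
      intro L _
      rw [vand (μ a) (∑ j ∈ L, μ j) d, Finset.sum_range_succ']
      simp only [Nat.choose_zero_right, Nat.cast_one, one_mul, Nat.sub_zero]
      rw [mul_add, Finset.mul_sum]
      have hsw : ∑ k ∈ range d, (-1:ℤ)^(T.card - L.card) *
            (((μ a).choose (k+1) : ℤ) * ((∑ j ∈ L, μ j).choose (d-(k+1)) : ℤ))
          = ∑ k ∈ range d, ((μ a).choose (k+1) : ℤ) *
            ((-1:ℤ)^(T.card - L.card) * ((∑ j ∈ L, μ j).choose (d-(k+1)) : ℤ)) :=
        Finset.sum_congr rfl fun k _ => by ring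
      rw [hsw]
      ring
    rw [Finset.sum_congr rfl key, Finset.sum_comm]
    have e3 : ∀ k ∈ range d,
        ∑ L ∈ T.powerset, ((μ a).choose (k+1) : ℤ) *
            ((-1:ℤ)^(T.card - L.card) * ((∑ j ∈ L, μ j).choose (d - (k+1)) : ℤ))
        = ((μ a).choose (k+1) : ℤ) *
            (if d - (k+1) = T.card then ∏ j ∈ T, (μ j : ℤ) else 0) := by
      intro k hk
      rw [← Finset.mul_sum, ih (d - (k+1)) (by omega)]
    rw [Finset.sum_congr rfl e3]
    rcases eq_or_lt_of_le hd with hd1 | hd2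
    · -- d = T.card + 1
      rw [hcard] at hd1
      rw [if_pos (by omega)]
      rw [Finset.sum_eq_single_of_mem 0 (Finset.mem_range.mpr (by omega))]
      · rw [if_pos (by omega)]
        rw [Finset.prod_insert ha]
        simp
      · intro k hk hk0
        have hk' := Finset.mem_range.mp hk
        rw [if_neg (by omega), mul_zero]
    · -- d ≤ T.card
      rw [hcard] at hd2
      rw [if_neg (by omega)]
      refine Finset.sum_eq_zero fun k hk => ?_
      have := Finset.mem_range.mp hk
      rw [if_neg (by omega), mul_zero]

private lemma Flem {ι : Type*} [DecidableEq ι] (μ : ι → ℕ) (S : Finset ι) (x : ℕ) (hx : 1 ≤ x) :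
    ∑ L ∈ S.powerset, (-1:ℤ)^(S.card - L.card) * (((x + ∑ j ∈ L, μ j) - 1).choose S.card : ℤ)
      = ∏ j ∈ S, (μ j : ℤ) := by
  have e1 : ∀ L ∈ S.powerset,
      (-1:ℤ)^(S.card - L.card) * (((x + ∑ j ∈ L, μ j) - 1).choose S.card : ℤ)
      = ∑ k ∈ range (S.card + 1), ((x-1).choose k : ℤ) *
          ((-1:ℤ)^(S.card - L.card) * ((∑ j ∈ L, μ j).choose (S.card - k) : ℤ)) := by
    intro L _
    have hx1 : x + ∑ j ∈ L, μ j - 1 = (x - 1) + ∑ j ∈ L, μ j := by omega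
    rw [hx1, vand, Finset.mul_sum]
    refine Finset.sum_congr rfl fun k _ => ?_
    ring
  rw [Finset.sum_congr rfl e1, Finset.sum_comm]
  have e2 : ∀ k ∈ range (S.card + 1),
      ∑ L ∈ S.powerset, ((x-1).choose k : ℤ) *
          ((-1:ℤ)^(S.card - L.card) * ((∑ j ∈ L, μ j).choose (S.card - k) : ℤ))
      = ((x-1).choose k : ℤ) * (if S.card - k = S.card then ∏ j ∈ S, (μ j:ℤ) else 0) := by
    intro k hk
    rw [← Finset.mul_sum, Glem μ S (S.card - k) (by omega)]
  rw [Finset.sum_congr rfl e2, Finset.sum_range_succ']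
  have e3 : ∀ k ∈ range S.card,
      ((x-1).choose (k+1) : ℤ) * (if S.card - (k+1) = S.card then ∏ j ∈ S, (μ j:ℤ) else 0) = 0 := by
    intro k hk
    have := Finset.mem_range.mp hk
    rw [if_neg (by omega), mul_zero]
  rw [Finset.sum_congr rfl e3]
  simp

theorem stmt9 (r s : ℕ) (hr : 1 ≤ r) (hrs : r < s) (μ : Fin s → ℕ)
    (hμ : ∀ j, 1 ≤ μ j)
    (m : ℕ → ℤ)
    (hm : ∀ i, m i = ∑ J ∈ Finset.powersetCard i (Finset.univ : Finset (Fin s)),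
      (((∑ j ∈ J, μ j) - 1).choose r : ℤ)) :
    ∑ i ∈ Finset.Icc (s - r) s, (-1 : ℤ) ^ (s + i) * (i.choose (s - r)) * m i
        = ∑ J ∈ Finset.powersetCard r (Finset.univ : Finset (Fin s)),
            ∏ j ∈ J, (μ j : ℤ) ∧
      0 ≤ ∑ i ∈ Finset.Icc (s - r) s, (-1 : ℤ) ^ (s + i) * (i.choose (s - r)) * m i := by
  set f : Finset (Fin s) → ℤ := fun J => (((∑ j ∈ J, μ j) - 1).choose r : ℤ) with hf
  set g : Finset (Fin s) → ℤ :=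
    fun J => (-1:ℤ)^(s + J.card) * (J.card.choose (s-r) : ℤ) * f J with hg
  have key : ∑ i ∈ Finset.Icc (s - r) s, (-1 : ℤ) ^ (s + i) * (i.choose (s - r)) * m i
      = ∑ J ∈ Finset.powersetCard r (Finset.univ : Finset (Fin s)), ∏ j ∈ J, (μ j : ℤ) := by
    simp only [hm]
    calc
      ∑ i ∈ Finset.Icc (s - r) s, (-1 : ℤ) ^ (s + i) * (i.choose (s - r)) *
          (∑ J ∈ Finset.powersetCard i (Finset.univ : Finset (Fin s)), f J)
          = ∑ i ∈ Finset.range (s+1), (-1 : ℤ) ^ (s + i) * (i.choose (s - r)) *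
          (∑ J ∈ Finset.powersetCard i (Finset.univ : Finset (Fin s)), f J) := by
        refine Finset.sum_subset ?_ ?_
        · intro i hi
          have := Finset.mem_Icc.mp hi
          exact Finset.mem_range.mpr (by omega)
        · intro i hi hni
          have h1 := Finset.mem_range.mp hi
          have h2 : i < s - r := by
            rcases Nat.lt_or_ge i (s-r) with h | h
            · exact h
            · exact absurd (Finset.mem_Icc.mpr ⟨h, by omega⟩) hni
          rw [Nat.choose_eq_zero_of_lt h2]
          simp
      _ = ∑ i ∈ Finset.range (s+1),
            ∑ J ∈ Finset.powersetCard i (Finset.univ : Finset (Fin s)), g J := by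
        refine Finset.sum_congr rfl fun i hi => ?_
        rw [Finset.mul_sum]
        refine Finset.sum_congr rfl fun J hJ => ?_
        have hJc := (Finset.mem_powersetCard.mp hJ).2
        simp only [hg, hJc]
      _ = ∑ J ∈ (Finset.univ : Finset (Fin s)).powerset, g J := by
        rw [Finset.sum_powerset, Finset.card_univ, Fintype.card_fin]
      _ = ∑ J ∈ (Finset.univ : Finset (Fin s)).powerset,
            ∑ _K ∈ J.powersetCard (s-r), ((-1:ℤ)^(s + J.card) * f J) := by
        refine Finset.sum_congr rfl fun J _ => ?_
        rw [Finset.sum_const, Finset.card_powersetCard, nsmul_eq_mul, hg]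
        ring
      _ = ∑ K ∈ Finset.powersetCard (s-r) (Finset.univ : Finset (Fin s)),
            ∑ J ∈ (Finset.univ : Finset (Fin s)).powerset.filter (fun J => K ⊆ J),
              ((-1:ℤ)^(s + J.card) * f J) := by
        refine Finset.sum_comm' ?_
        intro J K
        simp only [Finset.mem_powerset, Finset.mem_powersetCard, Finset.mem_filter]
        constructor
        · rintro ⟨h1, h2, h3⟩
          exact ⟨⟨h1, h2⟩, fun x _ => Finset.mem_univ x, h3⟩
        · rintro ⟨⟨h1, h2⟩, h3, h4⟩
          exact ⟨h1, h2, h4⟩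
      _ = ∑ K ∈ Finset.powersetCard (s-r) (Finset.univ : Finset (Fin s)),
            ∏ j ∈ Kᶜ, (μ j : ℤ) := by
        refine Finset.sum_congr rfl fun K hK => ?_
        have hKcard : K.card = s - r := (Finset.mem_powersetCard.mp hK).2
        have hKc : (Kᶜ : Finset (Fin s)).card = r := by
          rw [Finset.card_compl, Fintype.card_fin]
          omega
        have hKne : K.Nonempty := Finset.card_pos.mp (by omega)
        obtain ⟨j0, hj0⟩ := hKne
        have hx : 1 ≤ ∑ j ∈ K, μ j :=
          le_trans (hμ j0) (Finset.single_le_sum (fun j _ => Nat.zero_le _) hj0)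
        rw [← Flem μ Kᶜ (∑ j ∈ K, μ j) hx]
        refine Finset.sum_nbij' (fun J => J \ K) (fun L => K ∪ L) ?_ ?_ ?_ ?_ ?_
        · intro J hJ
          have hKJ : K ⊆ J := (Finset.mem_filter.mp hJ).2
          exact Finset.mem_powerset.mpr (fun x hx' =>
            Finset.mem_compl.mpr (Finset.mem_sdiff.mp hx').2)
        · intro L hL
          have hL' : L ⊆ Kᶜ := Finset.mem_powerset.mp hL
          refine Finset.mem_filter.mpr ⟨Finset.mem_powerset.mpr (fun x _ => Finset.mem_univ x),
            Finset.subset_union_left⟩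
        · intro J hJ
          have hKJ : K ⊆ J := (Finset.mem_filter.mp hJ).2
          exact Finset.union_sdiff_of_subset hKJ
        · intro L hL
          have hL' : L ⊆ Kᶜ := Finset.mem_powerset.mp hL
          have hdisj : Disjoint K L := by
            refine Finset.disjoint_left.mpr fun x hxK hxL => ?_
            exact (Finset.mem_compl.mp (hL' hxL)) hxK
          exact Finset.union_sdiff_cancel_left hdisj
        · intro J hJ
          have hKJ : K ⊆ J := (Finset.mem_filter.mp hJ).2
          have hdisj : Disjoint K (J \ K) := Finset.disjoint_sdiff
          have hJeq : K ∪ (J \ K) = J := Finset.union_sdiff_of_subset hKJ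
          have hcardJ : J.card = (s - r) + (J \ K).card := by
            conv_lhs => rw [← hJeq]
            rw [Finset.card_union_of_disjoint hdisj, hKcard]
          have hsumJ : ∑ j ∈ J, μ j = ∑ j ∈ K, μ j + ∑ j ∈ J \ K, μ j := by
            conv_lhs => rw [← hJeq]
            rw [Finset.sum_union hdisj]
          have hsub : (J \ K).card ≤ r := by
            have : J \ K ⊆ Kᶜ := fun x hx' => Finset.mem_compl.mpr (Finset.mem_sdiff.mp hx').2
            have := Finset.card_le_card this
            omega
          rw [hf]
          simp only
          rw [hsumJ, hcardJ, hKc]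
          congr 1
          exact negpow_eq _ _ (by omega)
      _ = ∑ J ∈ Finset.powersetCard r (Finset.univ : Finset (Fin s)), ∏ j ∈ J, (μ j : ℤ) := by
        refine Finset.sum_nbij' (fun K => Kᶜ) (fun J => Jᶜ) ?_ ?_ ?_ ?_ ?_
        · intro K hK
          have hKcard : K.card = s - r := (Finset.mem_powersetCard.mp hK).2
          refine Finset.mem_powersetCard.mpr ⟨fun x _ => Finset.mem_univ x, ?_⟩
          rw [Finset.card_compl, Fintype.card_fin]
          omega
        · intro J hJ
          have hJcard : J.card = r := (Finset.mem_powersetCard.mp hJ).2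
          refine Finset.mem_powersetCard.mpr ⟨fun x _ => Finset.mem_univ x, ?_⟩
          rw [Finset.card_compl, Fintype.card_fin]
          omega
        · intro K _; exact compl_compl K
        · intro J _; exact compl_compl J
        · intro K _; rfl
  refine ⟨key, ?_⟩
  rw [key]
  exact Finset.sum_nonneg fun J _ => Finset.prod_nonneg fun j _ => Int.natCast_nonneg _
end

section
/- Let $r \ge 1$ and let $P(T) = 1 + \sum_{i=0}^{r} (-1)^{r+i} m_i T^i \in \mathbb{Z}[T]$ where $m_i = \sum_{1 \le j_1 < \cdots < j_i \le r} \binom{\sum_{e=1}^i \mu_{j_e} - 1}{r}$ for positive integers $\mu_1, \dots, \mu_r$. Then $P(1) = \mu_1 \mu_2 \cdots \mu_r$. -/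
open Polynomial Finset in
private lemma altChoose (s : ℕ) : ∀ r : ℕ,
    ∑ i ∈ Finset.range (r + 1), (-1 : ℤ) ^ (r + i) * ((s + 1).choose i : ℤ)
      = (s.choose r : ℤ)
  | 0 => by simp
  | (r + 1) => by
    rw [Finset.sum_range_succ]
    have h1 : ∑ i ∈ Finset.range (r + 1), (-1 : ℤ) ^ (r + 1 + i) * ((s + 1).choose i : ℤ)
        = -(s.choose r : ℤ) := by
      rw [← altChoose s r, ← Finset.sum_neg_distrib]
      refine Finset.sum_congr rfl fun i _ => ?_
      have : r + 1 + i = (r + i) + 1 := by ring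
      rw [this, pow_succ]
      ring
    rw [h1]
    have h2 : (-1 : ℤ) ^ (r + 1 + (r + 1)) = 1 := by
      have : r + 1 + (r + 1) = 2 * (r + 1) := by ring
      rw [this, pow_mul]; norm_num
    rw [h2, one_mul]
    have := Nat.choose_succ_succ s r
    push_cast [this]
    ring

open Polynomial in
theorem stmt12 (r : ℕ) (hr : 1 ≤ r) (μ : Fin r → ℕ) (hμ : ∀ j, 1 ≤ μ j)
    (m : ℕ → ℤ)
    (hm : ∀ i, m i = ∑ J ∈ Finset.powersetCard i (Finset.univ : Finset (Fin r)),
      (((∑ j ∈ J, μ j) - 1).choose r : ℤ))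
    (P : ℤ[X])
    (hP : P = 1 + ∑ i ∈ Finset.range (r + 1),
      Polynomial.C ((-1 : ℤ) ^ (r + i) * m i) * X ^ i) :
    P.eval 1 = ∏ j, (μ j : ℤ) := by
  classical
  set s : Finset (Fin r) → ℕ := fun J => ∑ j ∈ J, μ j with hs
  set Q : ℤ[X] := ∏ j : Fin r, ((1 + X : ℤ[X]) ^ (μ j) - 1) with hQ
  have hcard : (Finset.univ : Finset (Fin r)).card = r := by simp
  -- evaluation of P at 1
  have h1 : P.eval 1 = 1 + ∑ i ∈ Finset.range (r + 1), (-1 : ℤ) ^ (r + i) * m i := by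
    simp [hP, Polynomial.eval_finset_sum]
  -- parity lemma
  have hpar : ∀ J : Finset (Fin r), J ∈ Finset.univ.powerset →
      (-1 : ℤ) ^ (r - J.card) = (-1 : ℤ) ^ (r + J.card) := by
    intro J hJ
    have hle : J.card ≤ r := by
      simpa [hcard] using Finset.card_le_card (Finset.mem_powerset.mp hJ)
    have : r + J.card = (r - J.card) + 2 * J.card := by omega
    rw [this, pow_add, pow_mul]
    norm_num
  -- coefficients of Q via the binomial expansion
  have h4 : ∀ i : ℕ, Q.coeff i
      = ∑ J ∈ Finset.univ.powerset,
          (-1 : ℤ) ^ (r + J.card) * ((s J).choose i : ℤ) := by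
    intro i
    have hexp : Q = ∑ J ∈ Finset.univ.powerset,
        (1 + X : ℤ[X]) ^ (s J) * Polynomial.C ((-1 : ℤ) ^ (r + J.card)) := by
      rw [hQ]
      have : ∀ j : Fin r, (1 + X : ℤ[X]) ^ (μ j) - 1
          = (1 + X : ℤ[X]) ^ (μ j) + (-1) := by intro j; ring
      rw [Finset.prod_congr rfl fun j _ => this j,
        Finset.prod_add (fun j => (1 + X : ℤ[X]) ^ (μ j)) (fun _ => (-1 : ℤ[X]))]
      refine Finset.sum_congr rfl fun J hJ => ?_
      rw [Finset.prod_pow_eq_pow_sum, Finset.prod_const,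
        Finset.card_sdiff_of_subset (Finset.mem_powerset.mp hJ), hcard]
      congr 1
      rw [← hpar J hJ]
      have hC : (-1 : ℤ[X]) = Polynomial.C (-1 : ℤ) := by simp
      rw [hC, ← Polynomial.C_pow]
    rw [hexp, Polynomial.finset_sum_coeff]
    refine Finset.sum_congr rfl fun J hJ => ?_
    rw [Polynomial.coeff_mul_C, Polynomial.coeff_one_add_X_pow]
    ring
  -- Q = H * X^r with H having constant coefficient ∏ μ
  have h5 : Q = (∏ j : Fin r, ∑ k ∈ Finset.range (μ j), (1 + X : ℤ[X]) ^ k) * X ^ r := by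
    rw [hQ]
    have hfac : ∀ j : Fin r, (1 + X : ℤ[X]) ^ (μ j) - 1
        = (∑ k ∈ Finset.range (μ j), (1 + X : ℤ[X]) ^ k) * X := by
      intro j
      have := geom_sum_mul (1 + X : ℤ[X]) (μ j)
      simpa using this.symm
    rw [Finset.prod_congr rfl fun j _ => hfac j, Finset.prod_mul_distrib,
      Finset.prod_const, hcard]
  have h6 : Q.coeff r = ∏ j, (μ j : ℤ) := by
    rw [h5]
    have := Polynomial.coeff_mul_X_pow
      (∏ j : Fin r, ∑ k ∈ Finset.range (μ j), (1 + X : ℤ[X]) ^ k) r 0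
    rw [zero_add] at this
    rw [this, Polynomial.coeff_zero_eq_eval_zero, Polynomial.eval_prod]
    refine Finset.prod_congr rfl fun j _ => ?_
    simp [Polynomial.eval_finset_sum]
  have h7 : ∀ i < r, Q.coeff i = 0 := by
    intro i hi
    rw [h5, Polynomial.coeff_mul_X_pow']
    simp [Nat.not_le.mpr hi]
  -- put everything together
  rw [h1]
  have h2 : ∑ i ∈ Finset.range (r + 1), (-1 : ℤ) ^ (r + i) * m i
      = ∑ J ∈ Finset.univ.powerset,
          (-1 : ℤ) ^ (r + J.card) * ((s J - 1).choose r : ℤ) := by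
    rw [Finset.sum_powerset, hcard]
    refine Finset.sum_congr rfl fun i _ => ?_
    rw [hm i, Finset.mul_sum]
    refine Finset.sum_congr rfl fun J hJ => ?_
    rw [(Finset.mem_powersetCard.mp hJ).2]
  rw [h2]
  have key : 1 + ∑ J ∈ Finset.univ.powerset,
      (-1 : ℤ) ^ (r + J.card) * ((s J - 1).choose r : ℤ)
      = ∑ J ∈ Finset.univ.powerset, (-1 : ℤ) ^ (r + J.card)
          * ∑ i ∈ Finset.range (r + 1), (-1 : ℤ) ^ (r + i) * ((s J).choose i : ℤ) := by
    have hmem : (∅ : Finset (Fin r)) ∈ (Finset.univ : Finset (Fin r)).powerset := by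
      simp
    rw [← Finset.add_sum_erase _ _ hmem, ← Finset.add_sum_erase _
      (fun J => (-1 : ℤ) ^ (r + J.card)
        * ∑ i ∈ Finset.range (r + 1), (-1 : ℤ) ^ (r + i) * ((s J).choose i : ℤ)) hmem]
    have hempty1 : ((s ∅ - 1).choose r : ℤ) = 0 := by
      have : s ∅ = 0 := by simp [hs]
      rw [this]
      norm_num [Nat.choose_eq_zero_of_lt (by omega : (0 : ℕ) - 1 < r)]
    have hempty2 : ∑ i ∈ Finset.range (r + 1), (-1 : ℤ) ^ (r + i) * ((s ∅).choose i : ℤ)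
        = (-1 : ℤ) ^ r := by
      have h0 : s ∅ = 0 := by simp [hs]
      rw [h0]
      rw [Finset.sum_eq_single_of_mem 0 (Finset.mem_range.mpr (by omega))]
      · simp
      · intro i _ hi
        rw [Nat.choose_eq_zero_of_lt (by omega)]
        simp
    rw [hempty1, hempty2]
    have hrest : ∀ J ∈ (Finset.univ.powerset).erase (∅ : Finset (Fin r)),
        (-1 : ℤ) ^ (r + J.card) * ((s J - 1).choose r : ℤ)
        = (-1 : ℤ) ^ (r + J.card)
          * ∑ i ∈ Finset.range (r + 1), (-1 : ℤ) ^ (r + i) * ((s J).choose i : ℤ) := by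
      intro J hJ
      have hne : J ≠ ∅ := (Finset.mem_erase.mp hJ).1
      have hpos : 1 ≤ s J := by
        obtain ⟨j, hj⟩ := Finset.nonempty_iff_ne_empty.mpr hne
        calc 1 ≤ μ j := hμ j
        _ ≤ s J := Finset.single_le_sum (fun k _ => Nat.zero_le (μ k)) hj
      have := altChoose (s J - 1) r
      rw [Nat.sub_add_cancel hpos] at this
      rw [this]
    rw [Finset.sum_congr rfl hrest]
    have : (-1 : ℤ) ^ (r + Finset.card (∅ : Finset (Fin r))) * (-1 : ℤ) ^ r = 1 := by
      simp only [Finset.card_empty, add_zero, ← pow_add]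
      have : r + r = 2 * r := by ring
      rw [this, pow_mul]; norm_num
    rw [Finset.card_empty, add_zero] at this ⊢
    rw [this]
    ring
  rw [key]
  have h9 : ∑ J ∈ Finset.univ.powerset, (-1 : ℤ) ^ (r + J.card)
        * ∑ i ∈ Finset.range (r + 1), (-1 : ℤ) ^ (r + i) * ((s J).choose i : ℤ)
      = ∑ i ∈ Finset.range (r + 1), (-1 : ℤ) ^ (r + i) * Q.coeff i := by
    simp_rw [Finset.mul_sum]
    rw [Finset.sum_comm]
    refine Finset.sum_congr rfl fun i _ => ?_
    rw [h4 i, Finset.mul_sum]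
    refine Finset.sum_congr rfl fun J _ => ?_
    ring
  rw [h9]
  rw [Finset.sum_eq_single_of_mem r (Finset.mem_range.mpr (by omega))]
  · rw [h6]
    have : r + r = 2 * r := by ring
    rw [this, pow_mul]
    norm_num
  · intro i hi hine
    rw [h7 i (by have := Finset.mem_range.mp hi; omega)]
    · ring
end

section
/- Let $1 \le r \le s$ be integers and let $\mu_1, \dots, \mu_s$ be positive integers. Define $m_i = \sum_{|J| = i, J \subseteq \{1,\dots,s\}} \binom{(\sum_{j \in J} \mu_j) - 1}{r}$. Then the polynomial $F(T) = 1 + (-1)^r \sum_{i=0}^s (-1)^i m_i T^i \in \mathbb{Q}[T]$ satisfies: the value of $\frac{(-1)^{s-r}}{(s-r)!} F^{(s-r)}(1)$ equals $e_r(\mu_1,\dots,\mu_s)$ when $s > r$, where $F^{(s-r)}$ denotes the $(s-r)$-th derivative. -/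
open Polynomial

lemma taylor_coeff_of_natDegree_le (p : ℚ[X]) (h : ℚ) (i : ℕ) (hd : p.natDegree ≤ i + 1) :
    (Polynomial.taylor h p).coeff i = p.coeff i + (i+1) * p.coeff (i+1) * h := by
  rw [Polynomial.taylor_coeff]
  have hh : hasseDeriv i p = C (p.coeff i) + C ((i+1 : ℚ) * p.coeff (i+1)) * X := by
    ext n
    rw [hasseDeriv_coeff, coeff_add, coeff_C, coeff_C_mul, coeff_X]
    match n with
    | 0 => simp
    | 1 =>
      have h1 : (1 + i).choose i = i + 1 := by
        rw [Nat.add_comm]; exact Nat.choose_succ_self_right i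
      simp [h1]
      ring_nf
      exact Or.inl trivial
    | (n+2) =>
      have h0 : p.coeff (n + 2 + i) = 0 :=
        coeff_eq_zero_of_natDegree_lt (by omega)
      simp [h0]
  rw [hh]
  simp

lemma taylor_sub_natDegree_le (p : ℚ[X]) (h : ℚ) (c : ℕ) (hd : p.natDegree ≤ c + 1) :
    (Polynomial.taylor h p - p).natDegree ≤ c := by
  rw [Polynomial.natDegree_le_iff_coeff_eq_zero]
  intro N hN
  rw [coeff_sub, taylor_coeff_of_natDegree_le p h N (by omega)]
  have : p.coeff (N + 1) = 0 := coeff_eq_zero_of_natDegree_lt (by omega)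
  simp [this]

lemma keydiff {ι : Type*} [DecidableEq ι] (μ : ι → ℕ) :
    ∀ (T : Finset ι) (p : ℚ[X]), p.natDegree ≤ T.card →
      ∑ L ∈ T.powerset, (-1:ℚ)^(T.card - L.card) * p.eval (∑ j ∈ L, (μ j : ℚ))
        = (T.card.factorial : ℚ) * p.coeff T.card * ∏ j ∈ T, (μ j : ℚ) := by
  intro T
  induction T using Finset.induction_on with
  | empty =>
    intro p hp
    rw [Polynomial.eq_C_of_natDegree_le_zero hp]
    simp
  | @insert a T ha ih =>
    intro p hp
    rw [Finset.card_insert_of_notMem ha] at hp ⊢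
    rw [Finset.powerset_insert, Finset.sum_union]
    · have himg : ∑ L ∈ T.powerset.image (insert a),
          (-1:ℚ)^(T.card + 1 - L.card) * p.eval (∑ j ∈ L, (μ j : ℚ))
          = ∑ L ∈ T.powerset,
            (-1:ℚ)^(T.card - L.card) * p.eval ((∑ j ∈ L, (μ j : ℚ)) + (μ a : ℚ)) := by
        rw [Finset.sum_image]
        · apply Finset.sum_congr rfl
          intro L hL
          rw [Finset.mem_powerset] at hL
          have haL : a ∉ L := fun h => ha (hL h)
          rw [Finset.card_insert_of_notMem haL, Finset.sum_insert haL]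
          have hLc : L.card ≤ T.card := Finset.card_le_card hL
          have : T.card + 1 - (L.card + 1) = T.card - L.card := by omega
          rw [this]
          ring_nf
        · intro x hx y hy hxy
          rw [Finset.mem_coe, Finset.mem_powerset] at hx hy
          have : ∀ z : Finset ι, z ⊆ T → (insert a z).erase a = z := by
            intro z hz
            rw [Finset.erase_insert (fun h => ha (hz h))]
          rw [← this x hx, ← this y hy, hxy]
      have hplain : ∑ L ∈ T.powerset,
          (-1:ℚ)^(T.card + 1 - L.card) * p.eval (∑ j ∈ L, (μ j : ℚ))
          = -∑ L ∈ T.powerset,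
            (-1:ℚ)^(T.card - L.card) * p.eval (∑ j ∈ L, (μ j : ℚ)) := by
        rw [← Finset.sum_neg_distrib]
        apply Finset.sum_congr rfl
        intro L hL
        rw [Finset.mem_powerset] at hL
        have hLc : L.card ≤ T.card := Finset.card_le_card hL
        have : T.card + 1 - L.card = (T.card - L.card) + 1 := by omega
        rw [this, pow_succ]
        ring
      rw [himg, hplain]
      have hq : ∀ L : Finset ι,
          (-1:ℚ)^(T.card - L.card) * p.eval ((∑ j ∈ L, (μ j : ℚ)) + (μ a : ℚ))
            - (-1:ℚ)^(T.card - L.card) * p.eval (∑ j ∈ L, (μ j : ℚ))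
          = (-1:ℚ)^(T.card - L.card)
              * (Polynomial.taylor (μ a : ℚ) p - p).eval (∑ j ∈ L, (μ j : ℚ)) := by
        intro L
        rw [Polynomial.eval_sub, Polynomial.taylor_eval]
        ring
      rw [add_comm, ← sub_eq_add_neg, ← Finset.sum_sub_distrib]
      simp_rw [hq]
      rw [ih (Polynomial.taylor (μ a : ℚ) p - p) (taylor_sub_natDegree_le p _ T.card hp)]
      rw [Polynomial.coeff_sub, taylor_coeff_of_natDegree_le p _ T.card hp]
      rw [Finset.prod_insert ha, Nat.factorial_succ]
      push_cast
      ring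
    · rw [Finset.disjoint_left]
      intro L hL hL2
      rw [Finset.mem_powerset] at hL
      rw [Finset.mem_image] at hL2
      obtain ⟨x, hx, rfl⟩ := hL2
      exact ha (hL (Finset.mem_insert_self a x))

noncomputable def pa (r a : ℕ) : ℚ[X] :=
  Polynomial.C ((r.factorial : ℚ))⁻¹ * (descPochhammer ℚ r).comp (X + Polynomial.C ((a:ℚ) - 1))

lemma pa_eval (r a : ℕ) (ha : 1 ≤ a) (n : ℕ) :
    (pa r a).eval (n : ℚ) = ((a + n - 1).choose r : ℚ) := by
  rw [pa, Polynomial.eval_mul, Polynomial.eval_C, Polynomial.eval_comp]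
  have h1 : (X + Polynomial.C ((a:ℚ) - 1)).eval (n:ℚ) = ((a + n - 1 : ℕ) : ℚ) := by
    simp
    push_cast [Nat.cast_sub (by omega : 1 ≤ a + n)]
    ring
  rw [h1, descPochhammer_eval_eq_descFactorial,
    Nat.descFactorial_eq_factorial_mul_choose]
  push_cast
  rw [← mul_assoc, inv_mul_cancel₀ (by exact_mod_cast r.factorial_ne_zero), one_mul]

lemma pa_natDegree_le (r a : ℕ) : (pa r a).natDegree ≤ r := by
  rw [pa]
  refine le_trans (Polynomial.natDegree_mul_le) ?_
  rw [Polynomial.natDegree_C, Polynomial.natDegree_comp, descPochhammer_natDegree,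
    Polynomial.natDegree_X_add_C]
  omega

lemma pa_coeff (r a : ℕ) : (pa r a).coeff r = ((r.factorial : ℚ))⁻¹ := by
  have hmon : ((descPochhammer ℚ r).comp (X + Polynomial.C ((a:ℚ) - 1))).Monic := by
    apply Polynomial.Monic.comp (monic_descPochhammer ℚ r) (Polynomial.monic_X_add_C _)
    rw [Polynomial.natDegree_X_add_C]; exact one_ne_zero
  have hdeg : ((descPochhammer ℚ r).comp (X + Polynomial.C ((a:ℚ) - 1))).natDegree = r := by
    rw [Polynomial.natDegree_comp, descPochhammer_natDegree, Polynomial.natDegree_X_add_C,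
      mul_one]
  have h2 := hmon.coeff_natDegree
  rw [hdeg] at h2
  rw [pa, Polynomial.coeff_C_mul, h2, mul_one]

lemma iter_deriv_add (n : ℕ) (p q : ℚ[X]) :
    derivative^[n] (p + q) = derivative^[n] p + derivative^[n] q := by
  induction n generalizing p q with
  | zero => simp
  | succ n ih => simp [Function.iterate_succ_apply, derivative_add, ih]

open Polynomial in
theorem stmt16 (r s : ℕ) (hr : 1 ≤ r) (hrs : r < s) (μ : Fin s → ℕ)
    (hμ : ∀ j, 1 ≤ μ j)
    (m : ℕ → ℕ)
    (hm : ∀ i, m i = ∑ J ∈ Finset.powersetCard i (Finset.univ : Finset (Fin s)),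
      (((∑ j ∈ J, μ j) - 1).choose r))
    (F : ℚ[X])
    (hF : F = 1 + (-1 : ℚ[X]) ^ r * ∑ i ∈ Finset.range (s + 1),
      Polynomial.C ((-1 : ℚ) ^ i * (m i : ℚ)) * X ^ i) :
    ((-1 : ℚ) ^ (s - r) / ((s - r).factorial : ℚ)) *
        ((Polynomial.derivative)^[s - r] F).eval 1
      = ∑ J ∈ Finset.powersetCard r (Finset.univ : Finset (Fin s)),
          ∏ j ∈ J, (μ j : ℚ) := by
  classical
  set k := s - r with hkdef
  have hk : r + k = s := by omega
  have hk1 : 1 ≤ k := by omega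
  -- Step A: evaluate the iterated derivative
  have hA : ((Polynomial.derivative)^[k] F).eval 1
      = (-1:ℚ)^r * ∑ i ∈ Finset.range (s+1),
          (-1:ℚ)^i * (m i : ℚ) * (i.descFactorial k : ℚ) := by
    rw [hF, iter_deriv_add, Polynomial.iterate_derivative_one (by omega : 0 < k), zero_add]
    have hC : ((-1:ℚ[X]))^r = Polynomial.C ((-1:ℚ)^r) := by simp
    rw [hC, Polynomial.iterate_derivative_C_mul, Polynomial.iterate_derivative_sum]
    simp_rw [Polynomial.iterate_derivative_C_mul,
      Polynomial.iterate_derivative_X_pow_eq_natCast_mul]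
    rw [Polynomial.eval_mul, Polynomial.eval_C, Polynomial.eval_finset_sum]
    congr 1
    apply Finset.sum_congr rfl
    intro i _
    simp [mul_assoc]
  rw [hA]
  -- Step B: turn into a sum with binomial coefficients
  have hB : ((-1:ℚ)^k / (k.factorial : ℚ)) * ((-1:ℚ)^r * ∑ i ∈ Finset.range (s+1),
        (-1:ℚ)^i * (m i : ℚ) * (i.descFactorial k : ℚ))
      = ∑ i ∈ Finset.range (s+1), (-1:ℚ)^(s+i) * (m i : ℚ) * (i.choose k : ℚ) := by
    rw [Finset.mul_sum, Finset.mul_sum]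
    apply Finset.sum_congr rfl
    intro i _
    rw [Nat.descFactorial_eq_factorial_mul_choose]
    push_cast
    have hkf : (k.factorial : ℚ) ≠ 0 := by exact_mod_cast k.factorial_ne_zero
    field_simp
    rw [← hk, pow_add]
    ring
  rw [hB]
  -- Step C: expand m i and merge into a single sum over subsets
  have hC2 : ∑ i ∈ Finset.range (s+1), (-1:ℚ)^(s+i) * (m i : ℚ) * (i.choose k : ℚ)
      = ∑ J ∈ (Finset.univ : Finset (Fin s)).powerset,
          (-1:ℚ)^(s + J.card) * (J.card.choose k : ℚ)
            * (((∑ j ∈ J, μ j) - 1).choose r : ℚ) := by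
    rw [Finset.sum_powerset]
    rw [show (Finset.univ : Finset (Fin s)).card = s by simp]
    apply Finset.sum_congr rfl
    intro i _
    rw [hm i]
    push_cast
    rw [Finset.mul_sum, Finset.sum_mul]
    apply Finset.sum_congr rfl
    intro J hJ
    rw [Finset.mem_powersetCard] at hJ
    rw [hJ.2]
    ring
  rw [hC2]
  -- Step D: binomial as cardinality, swap sums
  have hD : ∑ J ∈ (Finset.univ : Finset (Fin s)).powerset,
        (-1:ℚ)^(s + J.card) * (J.card.choose k : ℚ)
          * (((∑ j ∈ J, μ j) - 1).choose r : ℚ)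
      = ∑ J ∈ (Finset.univ : Finset (Fin s)).powerset,
          ∑ _K ∈ Finset.powersetCard k J,
            (-1:ℚ)^(s + J.card) * (((∑ j ∈ J, μ j) - 1).choose r : ℚ) := by
    apply Finset.sum_congr rfl
    intro J _
    rw [Finset.sum_const, Finset.card_powersetCard, nsmul_eq_mul]
    ring
  rw [hD]
  rw [Finset.sum_comm' (s := (Finset.univ : Finset (Fin s)).powerset)
    (t := fun J => Finset.powersetCard k J)
    (t' := Finset.powersetCard k (Finset.univ : Finset (Fin s)))
    (s' := fun K => (Finset.univ : Finset (Fin s)).powerset.filter (fun J => K ⊆ J))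
    (by
      intro J K
      simp only [Finset.mem_powerset, Finset.mem_powersetCard, Finset.mem_filter]
      constructor
      · rintro ⟨h1, h2, h3⟩
        exact ⟨⟨h1, h2⟩, h2.trans h1, h3⟩
      · rintro ⟨⟨h1, h2⟩, h3, h4⟩
        exact ⟨h1, h2, h4⟩)]
  -- Step E: inner sum over supersets of K equals product over complement
  have hE : ∀ K ∈ Finset.powersetCard k (Finset.univ : Finset (Fin s)),
      (∑ J ∈ (Finset.univ : Finset (Fin s)).powerset.filter (fun J => K ⊆ J),
        (-1:ℚ)^(s + J.card) * (((∑ j ∈ J, μ j) - 1).choose r : ℚ))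
      = ∏ j ∈ Kᶜ, (μ j : ℚ) := by
    intro K hK
    rw [Finset.mem_powersetCard] at hK
    have hKcard : K.card = k := hK.2
    have hKc : Kᶜ.card = r := by
      rw [Finset.card_compl, hKcard]
      simp only [Fintype.card_fin]
      omega
    have hμK : 1 ≤ ∑ j ∈ K, μ j := by
      obtain ⟨j0, hj0⟩ := Finset.card_pos.mp (by omega : 0 < K.card)
      calc 1 ≤ μ j0 := hμ j0
        _ ≤ ∑ j ∈ K, μ j := Finset.single_le_sum (fun i _ => Nat.zero_le _) hj0
    have hbij : (∑ J ∈ (Finset.univ : Finset (Fin s)).powerset.filter (fun J => K ⊆ J),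
          (-1:ℚ)^(s + J.card) * (((∑ j ∈ J, μ j) - 1).choose r : ℚ))
        = ∑ L ∈ Kᶜ.powerset,
            (-1:ℚ)^(Kᶜ.card - L.card)
              * (pa r (∑ j ∈ K, μ j)).eval (∑ j ∈ L, (μ j : ℚ)) := by
      apply Finset.sum_bij' (i := fun J _ => J \ K) (j := fun L _ => K ∪ L)
      · intro J hJ
        rw [Finset.mem_powerset]
        intro x hx
        rw [Finset.mem_sdiff] at hx
        rw [Finset.mem_compl]
        exact hx.2
      · intro L hL
        rw [Finset.mem_filter]
        exact ⟨Finset.mem_powerset.mpr (Finset.subset_univ _), Finset.subset_union_left⟩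
      · intro J hJ
        rw [Finset.mem_filter] at hJ
        exact Finset.union_sdiff_of_subset hJ.2
      · intro L hL
        rw [Finset.mem_powerset] at hL
        apply Finset.union_sdiff_cancel_left
        rw [Finset.disjoint_left]
        intro x hxK hxL
        have := hL hxL
        rw [Finset.mem_compl] at this
        exact this hxK
      · intro J hJ
        rw [Finset.mem_filter] at hJ
        have hsub : K ⊆ J := hJ.2
        have hdisj : Disjoint K (J \ K) := Finset.disjoint_sdiff
        have hcard : J.card = k + (J \ K).card := by
          rw [Finset.card_sdiff_of_subset hsub, hKcard]
          have := Finset.card_le_card hsub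
          rw [hKcard] at this
          omega
        have hsum : ∑ j ∈ J, μ j = (∑ j ∈ K, μ j) + ∑ j ∈ J \ K, μ j := by
          rw [← Finset.sum_union hdisj, Finset.union_sdiff_of_subset hsub]
        have hl : (J \ K).card ≤ r := by
          have h1 : J \ K ⊆ Kᶜ := by
            intro x hx
            rw [Finset.mem_sdiff] at hx
            rw [Finset.mem_compl]
            exact hx.2
          have := Finset.card_le_card h1
          omega
        have hcast : ∑ j ∈ J \ K, (μ j : ℚ) = ((∑ j ∈ J \ K, μ j : ℕ) : ℚ) := by
          push_cast
          rfl
        rw [hcast, pa_eval r _ hμK, ← hsum, hKc, hcard]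
        congr 1
        rw [show s + (k + (J \ K).card) = (r - (J \ K).card) + 2 * (k + (J \ K).card)
          from by omega, pow_add, pow_mul, neg_one_sq, one_pow, mul_one]
    rw [hbij, keydiff μ Kᶜ _ (by rw [hKc]; exact pa_natDegree_le r _), hKc, pa_coeff]
    rw [mul_inv_cancel₀ (by exact_mod_cast r.factorial_ne_zero), one_mul]
  rw [Finset.sum_congr rfl hE]
  -- Step F: reindex by complement
  refine Finset.sum_bij' (fun K _ => Kᶜ) (fun J _ => Jᶜ) ?w1 ?w2 ?w3 ?w4 (fun a ha => rfl)
  case w1 =>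
    intro K hK
    rw [Finset.mem_powersetCard] at hK ⊢
    refine ⟨Finset.subset_univ _, ?_⟩
    rw [Finset.card_compl, hK.2]
    simp only [Fintype.card_fin]
    omega
  case w2 =>
    intro J hJ
    rw [Finset.mem_powersetCard] at hJ ⊢
    refine ⟨Finset.subset_univ _, ?_⟩
    rw [Finset.card_compl, hJ.2]
    simp only [Fintype.card_fin]
    omega
  case w3 => intro K _; exact compl_compl K
  case w4 => intro J _; exact compl_compl J
end
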